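/- arXiv:2207.12463 — 2 statements merged into one kernel-verified Lean document; each statement's English description precedes it below -/
import Mathlib

section
/- Let Λ = {x ∈ ℝ^d : ‖x‖₁ = 1, xᵢ ≥ 0 for all i} be the probability simplex, let f : Λ → ℝ be convex, α ≥ 0, z ∈ Λ, and y a relative interior point of Λ. If x* minimizes f(x) + α·D_KL(x, y) over Λ, then f(x*) + α·D_KL(x*, y) ≤ f(z) + α·D_KL(z, y) − α·D_KL(z, x*). -/
open Finset Filter Set

theorem stmt0 {d : ℕ} (Λ : Set (Fin d → ℝ))
    (hΛ : Λ = {x : Fin d → ℝ | (∑ i, x i) = 1 ∧ ∀ i, 0 ≤ x i})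
    (f : (Fin d → ℝ) → ℝ) (hf : ConvexOn ℝ Λ f)
    (α : ℝ) (hα : 0 ≤ α)
    (KL : (Fin d → ℝ) → (Fin d → ℝ) → ℝ)
    (hKL : KL = fun p q => ∑ i, p i * Real.log (p i / q i))
    (z y xopt : Fin d → ℝ) (hz : z ∈ Λ) (hy : y ∈ Λ) (hypos : ∀ i, 0 < y i)
    (hxopt : xopt ∈ Λ)
    (hmin : ∀ x ∈ Λ, f xopt + α * KL xopt y ≤ f x + α * KL x y) :
    f xopt + α * KL xopt y ≤ f z + α * KL z y - α * KL z xopt := by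
  subst hΛ hKL
  obtain ⟨hz1, hz2⟩ := hz
  obtain ⟨hx1, hx2⟩ := hxopt
  rcases eq_or_lt_of_le hα with hα0 | hα0
  · have := hmin z ⟨hz1, hz2⟩
    simp only [← hα0, zero_mul, add_zero] at this ⊢
    linarith
  -- α > 0
  set δ : Fin d → ℝ := fun i => z i - xopt i with hδ
  set φ : Fin d → ℝ → ℝ := fun i t => (xopt i + t * δ i) * Real.log ((xopt i + t * δ i) / y i)
    with hφ
  have hδsum : ∑ i, δ i = 0 := by
    simp only [hδ, Finset.sum_sub_distrib, hz1, hx1, sub_self]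
  have hφ0 : ∀ i, φ i 0 = xopt i * Real.log (xopt i / y i) := by
    intro i; simp [hφ]
  -- key inequality
  have hkey : ∀ t ∈ Set.Ioc (0:ℝ) 1, f xopt - f z ≤ α * ∑ i, slope (φ i) 0 t := by
    intro t ht
    have hxt : (fun i => xopt i + t * δ i) ∈
        {x : Fin d → ℝ | (∑ i, x i) = 1 ∧ ∀ i, 0 ≤ x i} := by
      constructor
      · rw [Finset.sum_add_distrib, ← Finset.mul_sum, hδsum, hx1]; ring
      · intro i
        show (0:ℝ) ≤ xopt i + t * δ i
        have h1 := hx2 i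
        have h2 := hz2 i
        have ht1 := ht.1.le
        have ht2 := ht.2
        simp only [hδ]
        nlinarith
    have hcvx : f (fun i => xopt i + t * δ i) ≤ (1 - t) * f xopt + t * f z := by
      have h := hf.2 ⟨hx1, hx2⟩ ⟨hz1, hz2⟩ (by linarith [ht.2] : (0:ℝ) ≤ 1 - t) ht.1.le
        (by ring)
      have heq : (1 - t) • xopt + t • z = (fun i => xopt i + t * δ i) := by
        funext i
        simp [hδ, Pi.smul_apply, smul_eq_mul]
        ring
      rw [heq] at h
      simpa using h
    have hopt := hmin _ hxt
    beta_reduce at hopt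
    have hKt : (∑ i, (xopt i + t * δ i) * Real.log ((xopt i + t * δ i) / y i)) = ∑ i, φ i t := by
      simp [hφ]
    have hK0 : (∑ i, xopt i * Real.log (xopt i / y i)) = ∑ i, φ i 0 := by
      simp [hφ0]
    rw [hKt, hK0] at hopt
    have hslope : ∑ i, slope (φ i) 0 t = ((∑ i, φ i t) - ∑ i, φ i 0) / t := by
      rw [← Finset.sum_sub_distrib, Finset.sum_div]
      refine Finset.sum_congr rfl fun i _ => ?_
      rw [slope_def_field, sub_zero]
    rw [hslope, ← mul_div_assoc, le_div_iff₀ ht.1]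
    have hexp : α * ((∑ i, φ i t) - ∑ i, φ i 0)
        = α * (∑ i, φ i t) - α * (∑ i, φ i 0) := by ring
    rw [hexp]
    linarith [hopt, hcvx]
  -- derivative at good indices
  have hderiv : ∀ i, 0 < xopt i →
      Tendsto (slope (φ i) 0) (nhdsWithin 0 (Set.Ioi 0))
        (nhds (δ i * (Real.log (xopt i / y i) + 1))) := by
    intro i hxi
    have hrw : φ i = fun t => ((xopt i + t * δ i) * Real.log (xopt i + t * δ i))
        - (xopt i + t * δ i) * Real.log (y i) := by
      funext t
      rcases eq_or_ne (xopt i + t * δ i) 0 with h | h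
      · simp [hφ, h]
      · simp only [hφ, Real.log_div h (hypos i).ne']; ring
    have hu : HasDerivAt (fun t : ℝ => xopt i + t * δ i) (δ i) 0 := by
      simpa using ((hasDerivAt_id (0:ℝ)).mul_const (δ i)).const_add (xopt i)
    have hmlog : HasDerivAt (fun x : ℝ => x * Real.log x) (Real.log (xopt i) + 1)
        ((fun t : ℝ => xopt i + t * δ i) 0) := by
      simp only [zero_mul, add_zero]
      exact Real.hasDerivAt_mul_log hxi.ne'
    have h1 : HasDerivAt (fun t => (xopt i + t * δ i) * Real.log (xopt i + t * δ i))
        ((Real.log (xopt i) + 1) * δ i) 0 := by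
      have := hmlog.comp 0 hu
      exact this
    have h2 : HasDerivAt (fun t => (xopt i + t * δ i) * Real.log (y i))
        (δ i * Real.log (y i)) 0 := by
      simpa [mul_comm] using hu.mul_const (Real.log (y i))
    have h3 : HasDerivAt (φ i) (δ i * (Real.log (xopt i / y i) + 1)) 0 := by
      rw [hrw]
      exact (h1.sub h2).congr_deriv (by rw [Real.log_div hxi.ne' (hypos i).ne']; ring)
    exact (hasDerivAt_iff_tendsto_slope.mp h3).mono_left
      (nhdsWithin_mono _ (fun x hx => ne_of_gt hx))
  by_cases hsupp : ∀ i, xopt i = 0 → z i = 0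
  · -- good case
    have htend : Tendsto (fun t => α * ∑ i, slope (φ i) 0 t) (nhdsWithin 0 (Set.Ioi 0))
        (nhds (α * ∑ i, δ i * (Real.log (xopt i / y i) + 1))) := by
      apply Tendsto.const_mul
      apply tendsto_finset_sum
      intro i _
      rcases (hx2 i).lt_or_eq with hxi | hxi
      · exact hderiv i hxi
      · have hzi := hsupp i hxi.symm
        have hδi : δ i = 0 := by simp [hδ, hzi, ← hxi]
        have hs : slope (φ i) 0 = fun _ => (0:ℝ) := by
          funext t
          rw [slope_def_field]
          simp [hφ, hδi, ← hxi]
        rw [hs, hδi, zero_mul]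
        exact tendsto_const_nhds
    have hle : f xopt - f z ≤ α * ∑ i, δ i * (Real.log (xopt i / y i) + 1) := by
      refine ge_of_tendsto htend ?_
      filter_upwards [Ioo_mem_nhdsGT_of_mem (Set.left_mem_Ico.mpr one_pos)] with t ht
      exact hkey t ⟨ht.1, ht.2.le⟩
    have hsum : ∑ i, δ i * (Real.log (xopt i / y i) + 1) = ∑ i, δ i * Real.log (xopt i / y i) := by
      simp [mul_add, Finset.sum_add_distrib, hδsum]
    rw [hsum] at hle
    have hid : ∀ i, δ i * Real.log (xopt i / y i)
        = z i * Real.log (z i / y i) - z i * Real.log (z i / xopt i)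
          - xopt i * Real.log (xopt i / y i) := by
      intro i
      rcases eq_or_ne (z i) 0 with hzi | hzi
      · have hδi : δ i = -xopt i := by simp [hδ, hzi]
        rcases eq_or_ne (xopt i) 0 with hxi | hxi
        · simp [hzi, hδi, hxi]
        · simp [hzi, hδi]
      · have hxi : xopt i ≠ 0 := fun h => hzi (hsupp i h)
        simp only [hδ]
        rw [Real.log_div hzi (hypos i).ne', Real.log_div hzi hxi,
          Real.log_div hxi (hypos i).ne']
        ring
    have hsum2 : ∑ i, δ i * Real.log (xopt i / y i)
        = (∑ i, z i * Real.log (z i / y i)) - (∑ i, z i * Real.log (z i / xopt i))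
          - ∑ i, xopt i * Real.log (xopt i / y i) := by
      rw [← Finset.sum_sub_distrib, ← Finset.sum_sub_distrib]
      exact Finset.sum_congr rfl fun i _ => hid i
    rw [hsum2] at hle
    simp only
    nlinarith [hle]
  · -- bad case : contradiction
    push_neg at hsupp
    obtain ⟨i0, hx0, hz0⟩ := hsupp
    exfalso
    classical
    set S : Finset (Fin d) := Finset.univ.filter (fun i => xopt i = 0) with hS
    set T : Finset (Fin d) := Finset.univ.filter (fun i => ¬ xopt i = 0) with hT
    have hcpos : 0 < ∑ i ∈ S, z i := by
      refine Finset.sum_pos' (fun i _ => hz2 i) ⟨i0, ?_, ?_⟩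
      · simp [hS, hx0]
      · exact lt_of_le_of_ne (hz2 i0) (Ne.symm hz0)
    have hEq : ∀ t ∈ Set.Ioi (0:ℝ), ∑ i, slope (φ i) 0 t
        = Real.log t * (∑ i ∈ S, z i)
          + ((∑ i ∈ S, z i * Real.log (z i / y i)) + ∑ i ∈ T, slope (φ i) 0 t) := by
      intro t ht
      have hsplit : ∑ i, slope (φ i) 0 t
          = (∑ i ∈ S, slope (φ i) 0 t) + ∑ i ∈ T, slope (φ i) 0 t := by
        rw [hS, hT, Finset.sum_filter_add_sum_filter_not]
      rw [hsplit]
      have hSterm : ∀ i ∈ S, slope (φ i) 0 t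
          = Real.log t * z i + z i * Real.log (z i / y i) := by
        intro i hi
        have hxi : xopt i = 0 := by simpa [hS] using hi
        have hδi : δ i = z i := by simp [hδ, hxi]
        rw [slope_def_field, sub_zero, hφ0, hxi, zero_mul, sub_zero]
        rcases eq_or_ne (z i) 0 with hzi | hzi
        · simp [hφ, hδi, hxi, hzi]
        · have hφt : φ i t = t * (z i * Real.log (t * (z i / y i))) := by
            rw [hφ]
            simp only [hxi, hδi, zero_add, mul_div_assoc]
            ring
          rw [hφt, mul_div_cancel_left₀ _ (ne_of_gt ht),
            Real.log_mul (ne_of_gt ht) (div_ne_zero hzi (hypos i).ne')]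
          ring
      rw [Finset.sum_congr rfl hSterm, Finset.sum_add_distrib, ← Finset.mul_sum]
      ring
    have htendT : Tendsto (fun t => (∑ i ∈ S, z i * Real.log (z i / y i))
        + ∑ i ∈ T, slope (φ i) 0 t) (nhdsWithin 0 (Set.Ioi 0))
        (nhds ((∑ i ∈ S, z i * Real.log (z i / y i))
          + ∑ i ∈ T, δ i * (Real.log (xopt i / y i) + 1))) := by
      apply Tendsto.const_add
      apply tendsto_finset_sum
      intro i hi
      have hxi : xopt i ≠ 0 := by simpa [hT] using hi
      exact hderiv i (lt_of_le_of_ne (hx2 i) (Ne.symm hxi))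
    have hbot : Tendsto (fun t => ∑ i, slope (φ i) 0 t) (nhdsWithin 0 (Set.Ioi 0)) atBot := by
      refine Tendsto.congr' ?_ ((Real.tendsto_log_nhdsGT_zero.atBot_mul_const
        hcpos).atBot_add htendT)
      filter_upwards [self_mem_nhdsWithin] with t ht
      exact (hEq t ht).symm
    have hbot2 : Tendsto (fun t => α * ∑ i, slope (φ i) 0 t) (nhdsWithin 0 (Set.Ioi 0)) atBot :=
      hbot.const_mul_atBot hα0
    have h1 := hbot2.eventually (eventually_lt_atBot (f xopt - f z))
    have h2 : ∀ᶠ t in nhdsWithin (0:ℝ) (Set.Ioi 0),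
        f xopt - f z ≤ α * ∑ i, slope (φ i) 0 t := by
      filter_upwards [Ioo_mem_nhdsGT_of_mem (Set.left_mem_Ico.mpr one_pos)] with t ht
      exact hkey t ⟨ht.1, ht.2.le⟩
    obtain ⟨t, hlt, hge⟩ := (h1.and h2).exists
    linarith
end

section
/- Let S be a finite state space, H a horizon, and for a Markov game with single-controller transition P_h(s'|s,a) (independent of b), policies μ = {μ_h}, ν = {ν_h}, ν' = {ν'_h}, and reward r_h : S × A × B → ℝ, the value difference satisfies V₁^{μ,ν}(s₁) − V₁^{μ,ν'}(s₁) = Σ_{h=1}^H Σ_{s∈S} q_h^{μ,P}(s) · μ_h(·|s)ᵀ r_h(s,·,·) (ν_h(·|s) − ν'_h(·|s)), where q_h^{μ,P}(s) = Pr(s_h = s | μ, P, s₁) is the state reaching probability under μ and P (which does not depend on ν or ν'). -/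
open Finset

theorem stmt12 {S A B : Type*} [Fintype S] [Fintype A] [Fintype B]
    (H : ℕ) (s₁ : S)
    (P : ℕ → S → A → S → ℝ) (r : ℕ → S → A → B → ℝ)
    (μ : ℕ → S → A → ℝ) (ν ν' : ℕ → S → B → ℝ)
    (hμ : ∀ h s, (∀ a, 0 ≤ μ h s a) ∧ ∑ a, μ h s a = 1)
    (hν : ∀ h s, (∀ b, 0 ≤ ν h s b) ∧ ∑ b, ν h s b = 1)
    (hν' : ∀ h s, (∀ b, 0 ≤ ν' h s b) ∧ ∑ b, ν' h s b = 1)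
    (hP : ∀ h s a, (∀ s', 0 ≤ P h s a s') ∧ ∑ s', P h s a s' = 1)
    (V V' : ℕ → S → ℝ) (q : ℕ → S → ℝ)
    (hV : ∀ h ∈ Finset.Icc 1 H, ∀ s, V h s =
      ∑ a, ∑ b, μ h s a * (r h s a b + ∑ s', P h s a s' * V (h+1) s') * ν h s b)
    (hV' : ∀ h ∈ Finset.Icc 1 H, ∀ s, V' h s =
      ∑ a, ∑ b, μ h s a * (r h s a b + ∑ s', P h s a s' * V' (h+1) s') * ν' h s b)
    (hVend : ∀ s, V (H+1) s = 0) (hV'end : ∀ s, V' (H+1) s = 0)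
    (hq1 : q 1 s₁ = 1) (hq1' : ∀ s, s ≠ s₁ → q 1 s = 0)
    (hqrec : ∀ h s', q (h+1) s' = ∑ s, ∑ a, q h s * μ h s a * P h s a s') :
    V 1 s₁ - V' 1 s₁ =
      ∑ h ∈ Finset.Icc 1 H, ∑ s, q h s *
        (∑ a, ∑ b, μ h s a * r h s a b * (ν h s b - ν' h s b)) := by
  set G : ℕ → S → ℝ := fun h s => ∑ a, ∑ b, μ h s a * r h s a b * (ν h s b - ν' h s b)
    with hG
  -- auxiliary expansion lemma
  have e1 : ∀ h s (X : A → ℝ) (νh : S → B → ℝ), (∑ b, νh s b = 1) →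
      ∑ a, ∑ b, μ h s a * (r h s a b + X a) * νh s b
      = (∑ a, ∑ b, μ h s a * r h s a b * νh s b) + ∑ a, μ h s a * X a := by
    intro h s X νh h1
    rw [← Finset.sum_add_distrib]
    refine Finset.sum_congr rfl fun a _ => ?_
    have : ∑ b, μ h s a * (r h s a b + X a) * νh s b
        = ∑ b, (μ h s a * r h s a b * νh s b + (μ h s a * X a) * νh s b) := by
      refine Finset.sum_congr rfl fun b _ => by ring
    rw [this, Finset.sum_add_distrib, ← Finset.mul_sum, h1, mul_one]
  -- per-state difference decomposition
  have key : ∀ h, h ∈ Finset.Icc 1 H → ∀ s,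
      V h s - V' h s = G h s
        + ∑ a, μ h s a * ∑ s', P h s a s' * (V (h+1) s' - V' (h+1) s') := by
    intro h hm s
    rw [hV h hm s, hV' h hm s,
      e1 h s (fun a => ∑ s', P h s a s' * V (h+1) s') (ν h) (hν h s).2,
      e1 h s (fun a => ∑ s', P h s a s' * V' (h+1) s') (ν' h) (hν' h s).2]
    have hGs : G h s = (∑ a, ∑ b, μ h s a * r h s a b * ν h s b)
        - ∑ a, ∑ b, μ h s a * r h s a b * ν' h s b := by
      rw [hG]
      simp only [← Finset.sum_sub_distrib]
      exact Finset.sum_congr rfl fun a _ => Finset.sum_congr rfl fun b _ => by ring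
    have h2 : ∑ a, μ h s a * ∑ s', P h s a s' * (V (h+1) s' - V' (h+1) s')
        = (∑ a, μ h s a * ∑ s', P h s a s' * V (h+1) s')
          - ∑ a, μ h s a * ∑ s', P h s a s' * V' (h+1) s' := by
      simp only [← Finset.sum_sub_distrib]
      refine Finset.sum_congr rfl fun a _ => ?_
      rw [← mul_sub, ← Finset.sum_sub_distrib]
      congr 1
      exact Finset.sum_congr rfl fun s' _ => by ring
    rw [hGs, h2]; ring
  -- step lemma
  have step : ∀ h, h ∈ Finset.Icc 1 H →
      ∑ s, q h s * (V h s - V' h s)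
      = (∑ s, q h s * G h s)
        + ∑ s', q (h+1) s' * (V (h+1) s' - V' (h+1) s') := by
    intro h hm
    have : ∑ s', q (h+1) s' * (V (h+1) s' - V' (h+1) s')
        = ∑ s, q h s * ∑ a, μ h s a * ∑ s', P h s a s' * (V (h+1) s' - V' (h+1) s') := by
      simp only [hqrec, Finset.sum_mul, Finset.mul_sum]
      rw [Finset.sum_comm]
      refine Finset.sum_congr rfl fun s _ => ?_
      rw [Finset.sum_comm]
      refine Finset.sum_congr rfl fun a _ => Finset.sum_congr rfl fun s' _ => by ring
    rw [this, ← Finset.sum_add_distrib]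
    refine Finset.sum_congr rfl fun s _ => ?_
    rw [key h hm s]; ring
  -- downward induction
  have main : ∀ d h, h + d = H + 1 → 1 ≤ h →
      ∑ s, q h s * (V h s - V' h s) = ∑ k ∈ Finset.Icc h H, ∑ s, q k s * G k s := by
    intro d
    induction d with
    | zero =>
      intro h hd h1
      have : h = H + 1 := by omega
      subst this
      rw [Finset.Icc_eq_empty (by omega)]
      simp [hVend, hV'end]
    | succ n ih =>
      intro h hd h1
      have hm : h ∈ Finset.Icc 1 H := by simp [Finset.mem_Icc]; omega
      have hins : Finset.Icc h H = insert h (Finset.Icc (h+1) H) := by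
        ext k; simp [Finset.mem_Icc]; omega
      rw [step h hm, ih (h+1) (by omega) (by omega), hins,
        Finset.sum_insert (by simp)]
  have hfin : ∑ s, q 1 s * (V 1 s - V' 1 s) = V 1 s₁ - V' 1 s₁ := by
    rw [Finset.sum_eq_single s₁]
    · rw [hq1, one_mul]
    · intro s _ hs; rw [hq1' s hs, zero_mul]
    · intro hs; exact absurd (Finset.mem_univ s₁) hs
  rw [← hfin, main H 1 (by omega) le_rfl]
end
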